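/- Let r be an odd prime power, let q = r², let F_q be the finite field with q elements, and let μ be a generator of the multiplicative group F_qˣ. For an integer j, let N_j be the number of elements α ∈ F_r^* = {α ∈ F_q : α^r = α, α ≠ 0} such that μ^j·α − 1 is a non-square in F_q. Then for every integer j with 1 ≤ j ≤ r: N_j = (r−1)/2 if j is odd, and N_j = (r+1)/2 if j is even. -/

import Mathlib

open Finset


lemma count_core (F : Type*) [Field F] [Fintype F] [DecidableEq F]
    (r e : ℕ) (he : r - 1 = 2 * e) (he1 : 1 ≤ e)
    (two_ne : (2 : F) ≠ 0)
    (hadd : ∀ x y : F, (x + y) ^ r = x ^ r + y ^ r)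
    (K : Finset F) (hK : ∀ x, x ∈ K ↔ x ^ r = x)
    (hKcard : K.card = r)
    (hsqrt : ∀ z : F, z ^ r = z → z ≠ 0 → z ^ e = 1 → ∃ w, w ^ r = w ∧ w ^ 2 = z)
    (D : F) (hDns : ∀ x : F, x ^ r = x → x ^ 2 ≠ D) (hD : D ^ r = D) :
    (K.filter (fun x => (x ^ 2 - D) ^ e = 1)).card = e ∧
    (K.filter (fun x => (x ^ 2 - D) ^ e = -1)).card = r - e := by
  have hr3 : 3 ≤ r := by omega
  have hrpos : r ≠ 0 := by omega
  have hone : (1:F) ≠ -1 := by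
    intro h; exact two_ne (by linear_combination h)
  have hsub : ∀ x y : F, (x - y) ^ r = x ^ r - y ^ r := by
    intro x y
    have h := hadd (x - y) y
    rw [sub_add_cancel] at h
    linear_combination -h
  have hDne : D ≠ 0 := fun h => hDns 0 (by rw [zero_pow hrpos]) (by simp [h])
  have hpow1 : ∀ z : F, z ^ r = z → z ≠ 0 → z ^ (r-1) = 1 := by
    intro z hz h0
    have h : z ^ (r - 1) * z = 1 * z := by
      rw [one_mul, ← pow_succ, show r - 1 + 1 = r by omega]; exact hz
    exact mul_right_cancel₀ h0 h
  have hval : ∀ x : F, x ^ r = x → (x^2 - D) ^ r = (x^2 - D) := by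
    intro x hx
    rw [hsub, ← pow_mul, mul_comm 2 r, pow_mul, hx, hD]
  have hvne : ∀ x : F, x ^ r = x → x^2 - D ≠ 0 := fun x hx h =>
    hDns x hx (by rwa [sub_eq_zero] at h)
  have hpm : ∀ z : F, z ^ r = z → z ≠ 0 → z ^ e = 1 ∨ z ^ e = -1 := by
    intro z hz h0
    have h1 : z ^ (r-1) = 1 := hpow1 z hz h0
    have h2 : (z ^ e - 1) * (z ^ e + 1) = 0 := by
      have h3 : z ^ e * z ^ e = 1 := by
        rw [← pow_add, show e + e = r - 1 by omega]; exact h1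
      linear_combination h3
    rcases mul_eq_zero.mp h2 with h | h
    · exact Or.inl (by linear_combination h)
    · exact Or.inr (by linear_combination h)
  set S2 : Finset (F × F) := (K ×ˢ K).filter (fun z => z.1^2 - z.2^2 = D) with hS2
  have hS2card : S2.card = r - 1 := by
    have hb : S2.card = (K.erase 0).card := by
      apply Finset.card_bij (fun z _ => z.1 + z.2)
      · rintro ⟨x, y⟩ hz
        simp only [hS2, Finset.mem_filter, Finset.mem_product] at hz
        obtain ⟨⟨hx, hy⟩, hxy⟩ := hz
        rw [Finset.mem_erase]
        constructor
        · intro h0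
          apply hDne
          have hxe : x = -y := by linear_combination h0
          rw [← hxy, hxe]; ring
        · rw [hK, hadd, (hK x).mp hx, (hK y).mp hy]
      · rintro ⟨x, y⟩ h1 ⟨x', y'⟩ h2 h
        simp only [hS2, Finset.mem_filter, Finset.mem_product] at h1 h2
        have hu : x + y ≠ 0 := by
          intro h0
          apply hDne
          have hxe : x = -y := by linear_combination h0
          rw [← h1.2, hxe]; ring
        have e1 : (x - y) * (x + y) = D := by linear_combination h1.2
        have e2 : (x' - y') * (x' + y') = D := by linear_combination h2.2
        rw [← h] at e2
        have hd : x - y = x' - y' := mul_right_cancel₀ hu (by rw [e1, e2])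
        have hx : x = x' := by
          have h2x : (2:F) * x = 2 * x' := by linear_combination h + hd
          exact mul_left_cancel₀ two_ne h2x
        have hy : y = y' := by linear_combination h - hx
        simp [Prod.ext_iff, hx, hy]
      · intro u hu
        rw [Finset.mem_erase, hK] at hu
        obtain ⟨hu0, hur⟩ := hu
        have huinv : (u⁻¹) ^ r = u⁻¹ := by rw [inv_pow, hur]
        have h2r : (2:F) ^ r = 2 := by
          have h := hadd 1 1; rw [one_pow] at h
          norm_num at h ⊢; rw [h]
        refine ⟨((u + D * u⁻¹) / 2, (u - D * u⁻¹) / 2), ?_, ?_⟩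
        · simp only [hS2, Finset.mem_filter, Finset.mem_product]
          refine ⟨⟨?_, ?_⟩, ?_⟩
          · rw [hK, div_pow, hadd, mul_pow, hur, hD, huinv, h2r]
          · rw [hK, div_pow, hsub, mul_pow, hur, hD, huinv, h2r]
          · field_simp
            ring
        · field_simp
          ring
    rw [hb, Finset.card_erase_of_mem ((hK 0).mpr (by rw [zero_pow hrpos])), hKcard]
  have hfib : S2.card = ∑ x ∈ K, (S2.filter (fun z => z.1 = x)).card :=
    Finset.card_eq_sum_card_fiberwise (fun z hz => by
      exact (Finset.mem_product.mp (Finset.mem_filter.mp hz).1).1)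
  have hfibval : ∀ x ∈ K, (S2.filter (fun z => z.1 = x)).card
      = if (x^2 - D)^e = 1 then 2 else 0 := by
    intro x hxK
    have hxr := (hK x).mp hxK
    have hne := hvne x hxr
    by_cases hc : (x^2 - D)^e = 1
    · rw [if_pos hc]
      obtain ⟨w, hwr, hw2⟩ := hsqrt (x^2 - D) (hval x hxr) hne hc
      have hw0 : w ≠ 0 := by
        intro h; rw [h] at hw2; apply hne; rw [← hw2]; ring
      have hww : w ≠ -w := by
        intro h
        apply hw0
        have h2w : (2:F) * w = 0 := by linear_combination h
        rcases mul_eq_zero.mp h2w with h' | h'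
        · exact absurd h' two_ne
        · exact h'
      have hnegw : (-w) ^ r = -w := by
        have h := hsub 0 w
        rw [zero_pow hrpos, zero_sub, zero_sub, hwr] at h
        exact h
      have hset : S2.filter (fun z => z.1 = x) = {(x, w), (x, -w)} := by
        ext ⟨a, b⟩
        simp only [hS2, Finset.mem_filter, Finset.mem_product, Finset.mem_insert,
          Finset.mem_singleton, Prod.mk.injEq]
        constructor
        · rintro ⟨⟨⟨ha, hb⟩, hab⟩, rfl⟩
          have hb2 : (b - w) * (b + w) = 0 := by linear_combination -hab - hw2
          rcases mul_eq_zero.mp hb2 with h | h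
          · exact Or.inl ⟨rfl, by linear_combination h⟩
          · exact Or.inr ⟨rfl, by linear_combination h⟩
        · rintro (⟨rfl, rfl⟩ | ⟨rfl, rfl⟩)
          · exact ⟨⟨⟨hxK, (hK _).mpr hwr⟩, by linear_combination -hw2⟩, rfl⟩
          · exact ⟨⟨⟨hxK, (hK _).mpr hnegw⟩, by linear_combination -hw2⟩, rfl⟩
      rw [hset, Finset.card_insert_of_notMem (by simp [Prod.ext_iff, hww]),
        Finset.card_singleton]
    · rw [if_neg hc]
      rw [Finset.card_eq_zero, Finset.filter_eq_empty_iff]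
      rintro ⟨a, b⟩ hz hax
      simp only [hS2, Finset.mem_filter, Finset.mem_product] at hz
      obtain ⟨⟨ha, hb⟩, hab⟩ := hz
      simp only at hax
      subst hax
      have hbr := (hK b).mp hb
      have hb0 : b ≠ 0 := by
        intro h0
        apply hne
        rw [← hab, h0]; ring
      apply hc
      have hb2 : b ^ 2 = a^2 - D := by linear_combination -hab
      calc (a^2 - D)^e = (b^2)^e := by rw [hb2]
        _ = b ^ (r - 1) := by rw [← pow_mul, he]
        _ = 1 := hpow1 b hbr hb0
  have hsum : r - 1 = 2 * (K.filter (fun x => (x^2 - D)^e = 1)).card := by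
    rw [← hS2card, hfib, Finset.sum_congr rfl hfibval, ← Finset.sum_filter,
      Finset.sum_const, smul_eq_mul, mul_comm]
  have hA : (K.filter (fun x => (x^2 - D)^e = 1)).card = e := by omega
  constructor
  · exact hA
  · have hBeq : K.filter (fun x => (x^2 - D)^e = -1)
        = K.filter (fun x => ¬ ((x^2 - D)^e = 1)) := by
      apply Finset.filter_congr
      intro x hx
      have hxr := (hK x).mp hx
      constructor
      · intro h h1; rw [h1] at h; exact hone h
      · intro h
        rcases hpm (x^2 - D) (hval x hxr) (hvne x hxr) with h' | h'
        · exact absurd h' h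
        · exact h'
    have := Finset.card_filter_add_card_filter_not
      (s := K) (p := fun x => (x^2 - D)^e = 1)
    rw [hKcard] at this
    rw [hBeq]
    omega

/-- Let `q = r²` with `r` an odd prime power, let `F` be the field with `q` elements,
and let `μ` be a generator of the multiplicative group `Fˣ` (an element of
multiplicative order `q - 1`).  For `1 ≤ j ≤ r`, the number `N_j` of nonzero
elements `α` of the subfield of order `r` (i.e. `α^r = α`, `α ≠ 0`) such that
`μ^j·α - 1` is a non-square in `F` equals `(r-1)/2` if `j` is odd and `(r+1)/2`
if `j` is even. -/
theorem count_nonsquares_Nj (p n r q : ℕ) (hp : p.Prime) (hodd : Odd p)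
    (hn : 1 ≤ n) (hr : r = p ^ n) (hq : q = r ^ 2)
    (F : Type*) [Field F] [Fintype F] (hF : Fintype.card F = q)
    (μ : F) (hμ : orderOf μ = q - 1)
    (j : ℕ) (hj1 : 1 ≤ j) (hjr : j ≤ r) :
    {α : F | α ^ r = α ∧ α ≠ 0 ∧ ¬ ∃ x : F, x ^ 2 = μ ^ j * α - 1}.ncard =
      if Odd j then (r - 1) / 2 else (r + 1) / 2 := by
  classical
  have hp2 : p ≠ 2 := by rintro rfl; revert hodd; decide
  have hp3 : 3 ≤ p := by have := hp.two_le; omega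
  have hrodd : Odd r := hr ▸ hodd.pow
  have hple : p ≤ r := by rw [hr]; exact Nat.le_self_pow (by omega) p
  have hr3 : 3 ≤ r := le_trans hp3 hple
  obtain ⟨e, hre⟩ := id hrodd
  have he : r - 1 = 2 * e := by omega
  have he1 : 1 ≤ e := by omega
  have hrne : r ≠ 0 := by omega
  have hq' : q = r * r := by rw [hq]; ring
  have hq9 : 9 ≤ q := by rw [hq']; nlinarith
  have hqodd : Odd q := by rw [hq]; exact hrodd.pow
  obtain ⟨k2, hk2⟩ := id hqodd
  have hq1 : q - 1 = (r + 1) * (2 * e) := by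
    have h : q = (r + 1) * (2 * e) + 1 := by rw [hq', hre]; ring
    rw [h]; simp
  have hq2 : (q - 1) / 2 = (r + 1) * e := by
    have h2 : q - 1 = 2 * ((r + 1) * e) := by rw [hq1]; ring
    rw [h2, Nat.mul_div_cancel_left _ (by norm_num : 0 < 2)]
  -- characteristic facts
  have hqp : q = p ^ (2 * n) := by rw [hq, hr, ← pow_mul, mul_comm]
  have hcF : CharP F (ringChar F) := ringChar.charP F
  have hprime : (ringChar F).Prime := CharP.char_is_prime F (ringChar F)
  have hdvd0 : ringChar F ∣ q := by
    rw [← hF]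
    exact (CharP.cast_eq_zero_iff F (ringChar F) _).mp (FiniteField.cast_card_eq_zero F)
  have hcharp : ringChar F = p := by
    have hd : ringChar F ∣ p := hprime.dvd_of_dvd_pow (hqp ▸ hdvd0)
    exact (Nat.prime_dvd_prime_iff_eq hprime hp).mp hd
  haveI : CharP F p := hcharp ▸ hcF
  haveI : Fact p.Prime := ⟨hp⟩
  have hadd : ∀ x y : F, (x + y) ^ r = x ^ r + y ^ r := by
    intro x y; rw [hr]; exact add_pow_char_pow x y p n
  have two_ne : (2 : F) ≠ 0 := by
    intro h
    have h2 : ((2:ℕ) : F) = 0 := by exact_mod_cast h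
    have hd := (CharP.cast_eq_zero_iff F p 2).mp h2
    have := Nat.le_of_dvd (by norm_num) hd
    omega
  have hone : (1:F) ≠ -1 := fun h => two_ne (by linear_combination h)
  have hRchar2 : ringChar F ≠ 2 := by rw [hcharp]; omega
  have hsub : ∀ x y : F, (x - y) ^ r = x ^ r - y ^ r := by
    intro x y
    have h := hadd (x - y) y
    rw [sub_add_cancel] at h
    linear_combination -h
  have h2r : (2:F) ^ r = 2 := by
    have h := hadd 1 1; rw [one_pow] at h; norm_num at h ⊢; rw [h]
  -- mu facts
  have hμ1 : μ ^ (q - 1) = 1 := by rw [← hμ]; exact pow_orderOf_eq_one μ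
  have hμ0 : μ ≠ 0 := by
    intro h; rw [h, zero_pow (by omega : q - 1 ≠ 0)] at hμ1; exact one_ne_zero hμ1.symm
  have hμq : μ ^ q = μ := by
    rw [show q = (q-1) + 1 by omega, pow_succ, hμ1, one_mul]
  have hdvdμ : ∀ m, μ ^ m = 1 ↔ (q - 1) ∣ m := by
    intro m; rw [← hμ]; exact (orderOf_dvd_iff_pow_eq_one).symm
  have hμhalf : μ ^ ((q - 1) / 2) = -1 := by
    have hsq : μ ^ ((q-1)/2) * μ ^ ((q-1)/2) = 1 := by
      rw [← pow_add, show (q-1)/2 + (q-1)/2 = q - 1 by omega]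
      exact hμ1
    have hfac : (μ ^ ((q-1)/2) - 1) * (μ ^ ((q-1)/2) + 1) = 0 := by linear_combination hsq
    rcases mul_eq_zero.mp hfac with h | h
    · exfalso
      have h1 : μ ^ ((q-1)/2) = 1 := by linear_combination h
      have hd := (hdvdμ _).mp h1
      have := Nat.le_of_dvd (by omega) hd
      omega
    · linear_combination h
  have hjndvd : ¬ (q - 1) ∣ j * (2 * e) := by
    intro hd
    rw [hq1] at hd
    obtain ⟨c, hc⟩ := hd
    have hj : j = (r + 1) * c := by
      have h2e : 0 < 2 * e := by omega
      apply Nat.eq_of_mul_eq_mul_right h2e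
      rw [hc]; ring
    rcases Nat.eq_zero_or_pos c with rfl | hcpos
    · rw [mul_zero] at hj; omega
    · have hle : r + 1 ≤ (r + 1) * c := Nat.le_mul_of_pos_right _ hcpos
      rw [← hj] at hle; omega
  -- building blocks
  set A := μ ^ j with hA
  set B := μ ^ (j * r) with hB
  have hAr : A ^ r = B := by rw [hA, hB, ← pow_mul]
  have hBr : B ^ r = A := by
    rw [hB, hA, ← pow_mul, show j * r * r = q * j by rw [hq']; ring, pow_mul, hμq]
  have hA0 : A ≠ 0 := pow_ne_zero _ hμ0
  have hB0 : B ≠ 0 := pow_ne_zero _ hμ0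
  have hτ : (B * A) ^ e = (-1 : F) ^ j := by
    have hBA : B * A = μ ^ (j * (r + 1)) := by
      rw [hA, hB, ← pow_add, show j*r + j = j*(r+1) by ring]
    calc (B*A)^e = μ ^ (((r+1)*e) * j) := by rw [hBA, ← pow_mul]; congr 1; ring
      _ = (μ ^ ((r+1)*e)) ^ j := by rw [pow_mul]
      _ = (-1) ^ j := by rw [← hq2, hμhalf]
  have hneg : ∀ y : F, (-y) ^ r = -(y ^ r) := by
    intro y
    have h0 := hsub 0 y
    rwa [zero_pow hrne, zero_sub, zero_sub] at h0
  have hδ0 : A - B ≠ 0 := by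
    intro h
    have h1 : A = B := by linear_combination h
    have h2 : A * 1 = A * μ ^ (j * (2*e)) := by
      rw [mul_one, hA, ← pow_add, show j + j*(2*e) = j*r by rw [hre]; ring, ← hB]
      exact h1
    have h3 : μ ^ (j*(2*e)) = 1 := (mul_left_cancel₀ hA0 h2).symm
    exact hjndvd ((hdvdμ _).mp h3)
  set D := (A - B)^2 with hD
  have hDr : D ^ r = D := by
    rw [hD, ← pow_mul, mul_comm 2 r, pow_mul, hsub, hAr, hBr]; ring
  have htwo_can : ∀ y : F, (2:F) * y = 0 → y = 0 := by
    intro y hy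
    rcases mul_eq_zero.mp hy with h' | h'
    · exact absurd h' two_ne
    · exact h'
  have hDns : ∀ x : F, x ^ r = x → x ^ 2 ≠ D := by
    intro x hx hxD
    have hfac : (x - (A - B)) * (x + (A - B)) = 0 := by
      rw [hD] at hxD; linear_combination hxD
    rcases mul_eq_zero.mp hfac with h | h
    · have hx1 : x = A - B := by linear_combination h
      rw [hx1, hsub, hAr, hBr] at hx
      exact hδ0 (htwo_can _ (by linear_combination -hx))
    · have hx1 : x = -(A - B) := by linear_combination h
      rw [hx1, hneg, hsub, hAr, hBr] at hx
      exact hδ0 (htwo_can _ (by linear_combination hx))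
  -- the subfield as a finset
  set Kf : Finset F := Finset.univ.filter (fun x : F => x ^ r = x) with hKf
  have hKmem : ∀ x : F, x ∈ Kf ↔ x ^ r = x := by intro x; simp [hKf]
  have hKR : ∀ x : F, x ^ r = x ↔ (x = 0 ∨ x ^ (2*e) = 1) := by
    intro x
    constructor
    · intro hx
      by_cases h0 : x = 0
      · exact Or.inl h0
      · right
        have h : x ^ (2*e) * x = 1 * x := by
          rw [one_mul, ← pow_succ, show 2*e + 1 = r by omega]; exact hx
        exact mul_right_cancel₀ h0 h
    · rintro (rfl | h)
      · rw [zero_pow hrne]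
      · rw [show r = 2*e + 1 by omega, pow_succ, h, one_mul]
  set ν := μ ^ (r + 1) with hν
  have hνord : orderOf ν = 2 * e := by
    rw [hν, orderOf_pow' μ (by omega : r + 1 ≠ 0), hμ, hq1,
      Nat.gcd_eq_right (dvd_mul_right _ _),
      Nat.mul_div_cancel_left _ (by omega : 0 < r + 1)]
  have hν0 : ν ≠ 0 := pow_ne_zero _ hμ0
  have hν1 : ν ^ (2*e) = 1 := by rw [← hνord]; exact pow_orderOf_eq_one ν
  have hνK : ∀ m : ℕ, (ν ^ m) ^ r = ν ^ m := by
    intro m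
    calc (ν ^ m) ^ r = μ ^ ((r+1)*(m*r)) := by rw [hν, ← pow_mul, ← pow_mul]
      _ = μ ^ (q*m) * μ ^ (r*m) := by
          rw [show (r+1)*(m*r) = q*m + r*m by rw [hq']; ring, pow_add]
      _ = μ ^ (m + r*m) := by rw [pow_mul, hμq, ← pow_add]
      _ = ν ^ m := by rw [hν, ← pow_mul, show (r+1)*m = m + r*m by ring]
  have hνe : ν ^ e = -1 := by rw [hν, ← pow_mul, ← hq2, hμhalf]
  set Rf : Finset F := Finset.univ.filter (fun x : F => x ^ (2*e) = 1) with hRf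
  have hRmem : ∀ x : F, x ∈ Rf ↔ x ^ (2*e) = 1 := by intro x; simp [hRf]
  have hRcard_le : Rf.card ≤ 2*e := by
    have hsub' : Rf ⊆ (Polynomial.nthRoots (2*e) (1:F)).toFinset := by
      intro x hx
      rw [Multiset.mem_toFinset, Polynomial.mem_nthRoots (by omega : 0 < 2*e)]
      exact (hRmem x).mp hx
    calc Rf.card ≤ _ := Finset.card_le_card hsub'
      _ ≤ Multiset.card (Polynomial.nthRoots (2*e) (1:F)) := Multiset.toFinset_card_le _
      _ ≤ 2*e := Polynomial.card_nthRoots _ _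
  set Pf : Finset F := (Finset.range (2*e)).image (fun k => ν ^ k) with hPf
  have hkey_inj : ∀ a b : ℕ, a ≤ b → b < 2*e → ν ^ a = ν ^ b → a = b := by
    intro a b hab hb h
    have hmul : ν ^ a * ν ^ (b - a) = ν ^ a * 1 := by
      rw [mul_one, ← pow_add, show a + (b - a) = b by omega]; exact h.symm
    have h1 : ν ^ (b - a) = 1 := mul_left_cancel₀ (pow_ne_zero _ hν0) hmul
    have h2 : orderOf ν ∣ (b - a) := orderOf_dvd_of_pow_eq_one h1
    rw [hνord] at h2
    have := Nat.eq_zero_of_dvd_of_lt h2 (by omega)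
    omega
    -- note: if b - a = 0 then a = b; but dvd of 0 is fine: handle zero case
  have hPcard : Pf.card = 2*e := by
    rw [hPf, Finset.card_image_of_injOn, Finset.card_range]
    intro a ha b hb hab
    simp only [Finset.coe_range, Set.mem_Iio] at ha hb
    rcases le_total a b with h | h
    · exact hkey_inj a b h hb hab
    · exact (hkey_inj b a h ha hab.symm).symm
  have hPsub : Pf ⊆ Rf := by
    intro x hx
    rw [hPf, Finset.mem_image] at hx
    obtain ⟨k, _, rfl⟩ := hx
    rw [hRmem, ← pow_mul, mul_comm k (2*e), pow_mul, hν1, one_pow]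
  have hPR : Pf = Rf := Finset.eq_of_subset_of_card_le hPsub (by rw [hPcard]; exact hRcard_le)
  have hKcard : Kf.card = r := by
    have h1 : Kf = insert (0:F) Rf := by
      ext x
      rw [hKmem, Finset.mem_insert, hRmem, hKR]
    have h0R : (0:F) ∉ Rf := by
      rw [hRmem, zero_pow (by omega : 2*e ≠ 0)]
      exact fun h => one_ne_zero h.symm
    rw [h1, Finset.card_insert_of_notMem h0R, ← hPR, hPcard]
    omega
  have hsqrt : ∀ z : F, z ^ r = z → z ≠ 0 → z ^ e = 1 → ∃ w, w ^ r = w ∧ w ^ 2 = z := by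
    intro z hz h0 hze
    have hzR : z ∈ Rf := (hRmem z).mpr (((hKR z).mp hz).resolve_left h0)
    rw [← hPR, hPf, Finset.mem_image] at hzR
    obtain ⟨k, hk, hzk⟩ := hzR
    rw [Finset.mem_range] at hk
    have hk2 : ((-1:F)) ^ k = 1 := by
      calc ((-1:F))^k = (ν ^ e) ^ k := by rw [hνe]
        _ = (ν ^ k) ^ e := by rw [← pow_mul, mul_comm e k, pow_mul]
        _ = z ^ e := by rw [hzk]
        _ = 1 := hze
    have hkeven : Even k := by
      by_contra hko
      rw [Nat.not_even_iff_odd] at hko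
      rw [hko.neg_one_pow] at hk2
      exact hone hk2.symm
    obtain ⟨m, hm⟩ := hkeven
    refine ⟨ν ^ m, hνK m, ?_⟩
    rw [← hzk, ← pow_mul, show m * 2 = k by omega]
  -- nonvanishing of μ^j α - 1
  have hyne : ∀ α : F, α ^ r = α → α ≠ 0 → A * α - 1 ≠ 0 := by
    intro α hα h0 h
    have h1 : A * α = 1 := by linear_combination h
    have hα2e : α ^ (2*e) = 1 := ((hKR α).mp hα).resolve_left h0
    have h2 : μ ^ (j * (2*e)) = 1 := by
      calc μ ^ (j*(2*e)) = A ^ (2*e) * α ^ (2*e) := by rw [hα2e, mul_one, hA, ← pow_mul]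
        _ = (A * α) ^ (2*e) := (mul_pow _ _ _).symm
        _ = 1 := by rw [h1, one_pow]
    exact hjndvd ((hdvdμ _).mp h2)
  set g : F → F := fun α => (B*A) * α^2 - (A + B) * α + 1 with hg
  have hgid : ∀ α : F, α ^ r = α → (A * α - 1) ^ (r+1) = g α := by
    intro α hα
    have hfr : (A * α - 1) ^ r = B * α - 1 := by
      rw [hsub, mul_pow, hAr, hα, one_pow]
    rw [pow_succ, hfr, hg]; ring
  have hy2e : ∀ y : F, y ≠ 0 → y ^ (2*((r+1)*e)) = 1 := by
    intro y hy
    have h1 : y ^ (Fintype.card F - 1) = 1 := FiniteField.pow_card_sub_one_eq_one y hy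
    rw [hF] at h1
    rw [show 2*((r+1)*e) = q - 1 by rw [hq1]; ring]
    exact h1
  have hmain : {α : F | α ^ r = α ∧ α ≠ 0 ∧ ¬ ∃ x : F, x ^ 2 = μ ^ j * α - 1}
      = ↑(Kf.filter (fun α => (g α) ^ e = -1)) := by
    ext α
    rw [Set.mem_setOf_eq, Finset.mem_coe, Finset.mem_filter, hKmem]
    constructor
    · rintro ⟨hα, h0, hns⟩
      refine ⟨hα, ?_⟩
      have hy0 : A * α - 1 ≠ 0 := hyne α hα h0
      have hge2 : (g α) ^ (2*e) = 1 := by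
        calc (g α)^(2*e) = ((A*α-1)^(r+1))^(2*e) := by rw [hgid α hα]
          _ = (A*α-1) ^ (2*((r+1)*e)) := by rw [← pow_mul]; congr 1; ring
          _ = 1 := hy2e _ hy0
      have hgne1 : (g α) ^ e ≠ 1 := by
        intro h1
        apply hns
        have hy1 : (A*α-1) ^ (Fintype.card F / 2) = 1 := by
          rw [hF, show q / 2 = (q-1)/2 by omega, hq2]
          calc (A*α-1)^((r+1)*e) = ((A*α-1)^(r+1))^e := by rw [pow_mul]
            _ = (g α)^e := by rw [hgid α hα]
            _ = 1 := h1
        obtain ⟨x, hx⟩ := (FiniteField.isSquare_iff hRchar2 hy0).mpr hy1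
        exact ⟨x, by rw [hx]; ring⟩
      have hfac : ((g α)^e - 1) * ((g α)^e + 1) = 0 := by
        have h3 : (g α)^e * (g α)^e = 1 := by
          rw [← pow_add, show e + e = 2*e by ring]; exact hge2
        linear_combination h3
      rcases mul_eq_zero.mp hfac with h | h
      · exact absurd (by linear_combination h) hgne1
      · linear_combination h
    · rintro ⟨hα, hcond⟩
      have h0 : α ≠ 0 := by
        rintro rfl
        have hg0 : g (0:F) = 1 := by rw [hg]; norm_num
        rw [hg0, one_pow] at hcond
        exact hone hcond
      refine ⟨hα, h0, ?_⟩
      rintro ⟨x, hx⟩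
      have hy0 : A * α - 1 ≠ 0 := hyne α hα h0
      have hx0 : x ≠ 0 := by
        rintro rfl
        apply hy0; rw [← hx]; ring
      have h1 : (g α) ^ e = 1 := by
        calc (g α)^e = ((A*α-1)^(r+1))^e := by rw [hgid α hα]
          _ = (x^2)^((r+1)*e) := by rw [← hx, ← pow_mul]
          _ = x ^ (2*((r+1)*e)) := by rw [← pow_mul]
          _ = 1 := hy2e x hx0
      rw [h1] at hcond
      exact hone hcond
  rw [hmain, Set.ncard_coe_finset]
  set t1 := B * A with ht1
  set s1 := A + B with hs1
  have hs1r : s1 ^ r = s1 := by rw [hs1, hadd, hAr, hBr, add_comm]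
  have ht1r : t1 ^ r = t1 := by rw [ht1, mul_pow, hBr, hAr, mul_comm]
  have ht10 : t1 ≠ 0 := mul_ne_zero hB0 hA0
  have h4e : (4:F) ^ e = 1 := by
    rw [show (4:F) = 2^2 by norm_num, ← pow_mul]
    exact ((hKR 2).mp h2r).resolve_left two_ne
  have hkey : ∀ α : F, (2*t1*α - s1)^2 - D = 4 * t1 * (g α) := by
    intro α
    simp only [hg, hD, hs1, ht1]
    ring
  have h2t : (2:F)*t1 ≠ 0 := mul_ne_zero two_ne ht10
  have hcount : (Kf.filter (fun α => (g α) ^ e = -1)).card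
      = (Kf.filter (fun x => (x^2 - D) ^ e = -((-1:F)^j))).card := by
    apply Finset.card_bij (fun α _ => 2*t1*α - s1)
    · intro α hα'
      obtain ⟨hαK, hcond⟩ := Finset.mem_filter.mp hα'
      have hα := (hKmem α).mp hαK
      refine Finset.mem_filter.mpr ⟨(hKmem _).mpr ?_, ?_⟩
      · rw [hsub, mul_pow, mul_pow, h2r, ht1r, hα, hs1r]
      · rw [hkey α, mul_pow, mul_pow, h4e, one_mul, hτ, hcond]; ring
    · intro α h1 α' h2 hh
      have hcc : (2*t1) * α = (2*t1) * α' := by linear_combination hh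
      exact mul_left_cancel₀ h2t hcc
    · intro x hx'
      obtain ⟨hxK, hcond⟩ := Finset.mem_filter.mp hx'
      have hxr := (hKmem x).mp hxK
      have hval : 2*t1*((x + s1)/(2*t1)) - s1 = x := by field_simp; ring
      refine ⟨(x + s1)/(2*t1), Finset.mem_filter.mpr ⟨(hKmem _).mpr ?_, ?_⟩, hval⟩
      · rw [div_pow, hadd, hxr, hs1r, mul_pow, h2r, ht1r]
      · have hx2 : (4*t1*(g ((x + s1)/(2*t1))))^e = -((-1:F)^j) := by
          rw [← hkey, hval]; exact hcond
        rw [mul_pow, mul_pow, h4e, one_mul, hτ] at hx2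
        have hx3 : (-1:F)^j * (g ((x+s1)/(2*t1)))^e = (-1:F)^j * (-1) := by
          rw [hx2]; ring
        exact mul_left_cancel₀ (pow_ne_zero j (by norm_num : (-1:F) ≠ 0)) hx3
  rw [hcount]
  obtain ⟨hAc, hBc⟩ := count_core F r e he he1 two_ne hadd Kf hKmem hKcard hsqrt D hDns hDr
  rcases Nat.even_or_odd j with hje | hjo
  · rw [if_neg (by simpa [Nat.not_odd_iff_even] using hje)]
    have hsgn : -((-1:F)^j) = -1 := by rw [hje.neg_one_pow]
    have hflt : Kf.filter (fun x : F => (x^2 - D)^e = -((-1:F)^j))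
        = Kf.filter (fun x : F => (x^2-D)^e = -1) :=
      Finset.filter_congr (fun x _ => by rw [hsgn])
    rw [hflt, hBc]
    omega
  · rw [if_pos hjo]
    have hsgn : -((-1:F)^j) = 1 := by rw [hjo.neg_one_pow, neg_neg]
    have hflt : Kf.filter (fun x : F => (x^2 - D)^e = -((-1:F)^j))
        = Kf.filter (fun x : F => (x^2-D)^e = 1) :=
      Finset.filter_congr (fun x _ => by rw [hsgn])
    rw [hflt, hAc]
    omega
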